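/- Let F be the free group on x_1, …, x_{n-1}, m_1, …, m_g, l_1, …, l_g and let k ≥ 2. Suppose φ is an automorphism of F/F_{k+2} such that φ(x_i) = α_i⁻¹ x_i α_i, φ(m_j) ≡ m_j β_j mod F_{k+2}, φ(l_j) ≡ l_j γ_j mod F_{k+2}, with α_i, β_j, γ_j ∈ F_k (viewed mod F_{k+2}). If φ fixes the class of ∂ = ∏_i x_i ∏_j [m_j, l_j] in F/F_{k+2}, then ∏_i [x_i, α_i] · ∏_j [m_j, γ_j][β_j, l_j] = 1 in F_{k+1}/F_{k+2}. -/

import Mathlib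

/-- `lcs G k` is the `k`-th term `G_k` of the lower central series, 1-indexed:
`G_1 = G`, `G_{k+1} = [G, G_k]`. -/
def lcs (G : Type*) [Group G] (k : ℕ) : Subgroup G := (⊤ : Subgroup G).lowerCentralSeries (k - 1)

instance lcs_normal (G : Type*) [Group G] (k : ℕ) : (lcs G k).Normal :=
  Subgroup.lowerCentralSeries_normal ⊤ (k - 1)

lemma lcs_antitone {G : Type*} [Group G] {k l : ℕ} (h : k ≤ l) : lcs G l ≤ lcs G k :=
  (⊤ : Subgroup G).lowerCentralSeries_antitone (Nat.sub_le_sub_right h 1)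

/-- The natural projection `G/G_l → G/G_k` for `k ≤ l`. -/
def lcsProj (G : Type*) [Group G] (l k : ℕ) (h : k ≤ l) :
    G ⧸ lcs G l →* G ⧸ lcs G k :=
  QuotientGroup.map _ _ (MonoidHom.id G) (fun _ hx => lcs_antitone h hx)
/-- The commutator used in the paper: `[x,y] = x⁻¹y⁻¹xy`. -/
def pcomm {G : Type*} [Group G] (x y : G) : G := x⁻¹ * y⁻¹ * x * y

/-- The free group on `x_1,…,x_{n-1}, m_1,…,m_g, l_1,…,l_g`. -/
abbrev FG (n g : ℕ) := FreeGroup (Fin (n - 1) ⊕ (Fin g ⊕ Fin g))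

def xgen {n g : ℕ} (i : Fin (n - 1)) : FG n g := FreeGroup.of (Sum.inl i)
def mgen {n g : ℕ} (j : Fin g) : FG n g := FreeGroup.of (Sum.inr (Sum.inl j))
def lgen {n g : ℕ} (j : Fin g) : FG n g := FreeGroup.of (Sum.inr (Sum.inr j))

/-- The boundary word `∂ = x_1 ⋯ x_{n-1} [m_1,l_1] ⋯ [m_g,l_g]`. -/
def bdry (n g : ℕ) : FG n g :=
  ((List.finRange (n - 1)).map (fun i => xgen i)).prod *
  ((List.finRange g).map (fun j => pcomm (mgen j) (lgen j))).prod

section AuxLemmas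

variable {G : Type*} [Group G]

lemma map_pcomm' {H FF : Type*} [Group H] [FunLike FF G H] [MonoidHomClass FF G H]
    (f : FF) (a b : G) : f (pcomm a b) = pcomm (f a) (f b) := by
  simp [pcomm, map_mul, map_inv]

/-- `⁅L_i, L_j⁆ ≤ L_{i+j+1}` for the lower central series. -/
lemma lcs_comm_le (G : Type*) [Group G] :
    ∀ (j i : ℕ), ⁅(⊤ : Subgroup G).lowerCentralSeries i, (⊤ : Subgroup G).lowerCentralSeries j⁆ ≤
      (⊤ : Subgroup G).lowerCentralSeries (i + j + 1) := by
  have hsucc : ∀ m : ℕ, (⊤ : Subgroup G).lowerCentralSeries (m + 1) = ⁅(⊤ : Subgroup G).lowerCentralSeries m, ⊤⁆ :=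
    fun _ => rfl
  intro j
  induction j with
  | zero =>
    intro i
    rw [show (⊤ : Subgroup G).lowerCentralSeries 0 = ⊤ from rfl]
    exact le_of_eq (hsucc i).symm
  | succ j ih =>
    intro i
    have hN : ((⊤ : Subgroup G).lowerCentralSeries (i + (j + 1) + 1)).Normal := Subgroup.lowerCentralSeries_normal ⊤ _
    set N := (⊤ : Subgroup G).lowerCentralSeries (i + (j + 1) + 1) with hNdef
    let f := QuotientGroup.mk' N
    have hsurj : Function.Surjective f := QuotientGroup.mk'_surjective N
    have hker : f.ker = N := QuotientGroup.ker_mk' N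
    -- three subgroups lemma in the quotient
    have h1 : ⁅⁅(⊤ : Subgroup G).map f, ((⊤ : Subgroup G).lowerCentralSeries i).map f⁆,
        ((⊤ : Subgroup G).lowerCentralSeries j).map f⁆ = ⊥ := by
      rw [← Subgroup.map_commutator, ← Subgroup.map_commutator, Subgroup.map_eq_bot_iff, hker]
      have : ⁅(⊤ : Subgroup G), (⊤ : Subgroup G).lowerCentralSeries i⁆ = (⊤ : Subgroup G).lowerCentralSeries (i + 1) := by
        rw [Subgroup.commutator_comm]; exact (hsucc i).symm
      rw [this]
      have := ih (i + 1)
      calc ⁅(⊤ : Subgroup G).lowerCentralSeries (i + 1), (⊤ : Subgroup G).lowerCentralSeries j⁆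
          ≤ (⊤ : Subgroup G).lowerCentralSeries (i + 1 + j + 1) := ih (i + 1)
        _ ≤ N := by rw [hNdef]; exact le_of_eq (by ring_nf)
    have h2 : ⁅⁅((⊤ : Subgroup G).lowerCentralSeries i).map f, ((⊤ : Subgroup G).lowerCentralSeries j).map f⁆,
        (⊤ : Subgroup G).map f⁆ = ⊥ := by
      rw [← Subgroup.map_commutator, ← Subgroup.map_commutator, Subgroup.map_eq_bot_iff, hker]
      calc ⁅⁅(⊤ : Subgroup G).lowerCentralSeries i, (⊤ : Subgroup G).lowerCentralSeries j⁆, ⊤⁆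
          ≤ ⁅(⊤ : Subgroup G).lowerCentralSeries (i + j + 1), ⊤⁆ :=
            Subgroup.commutator_mono (ih i) le_rfl
        _ = (⊤ : Subgroup G).lowerCentralSeries (i + j + 1 + 1) := (hsucc _).symm
        _ ≤ N := by rw [hNdef]; exact le_of_eq (by ring_nf)
    have h3 : ⁅⁅((⊤ : Subgroup G).lowerCentralSeries j).map f, (⊤ : Subgroup G).map f⁆,
        ((⊤ : Subgroup G).lowerCentralSeries i).map f⁆ = ⊥ :=
      Subgroup.commutator_commutator_eq_bot_of_rotate h1 h2
    rw [← Subgroup.map_commutator, ← Subgroup.map_commutator, Subgroup.map_eq_bot_iff, hker] at h3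
    calc ⁅(⊤ : Subgroup G).lowerCentralSeries i, (⊤ : Subgroup G).lowerCentralSeries (j + 1)⁆
        = ⁅(⊤ : Subgroup G).lowerCentralSeries i, ⁅(⊤ : Subgroup G).lowerCentralSeries j, ⊤⁆⁆ := by
          rw [hsucc]
      _ = ⁅⁅(⊤ : Subgroup G).lowerCentralSeries j, ⊤⁆, (⊤ : Subgroup G).lowerCentralSeries i⁆ := Subgroup.commutator_comm _ _
      _ ≤ N := h3

open scoped commutatorElement in
lemma pcomm_mem_lcs {a b : G} {i j : ℕ} (ha : a ∈ (⊤ : Subgroup G).lowerCentralSeries i)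
    (hb : b ∈ (⊤ : Subgroup G).lowerCentralSeries j) : pcomm a b ∈ (⊤ : Subgroup G).lowerCentralSeries (i + j + 1) := by
  have : pcomm a b = (⁅a⁻¹, b⁻¹⁆ : G) := by simp [pcomm, commutatorElement_def]
  rw [this]
  exact lcs_comm_le G j i
    (Subgroup.commutator_mem_commutator (inv_mem ha) (inv_mem hb))

lemma swap_aux (a b r : G) : b⁻¹ * (a * r) = a * (pcomm a b * (b⁻¹ * r)) := by
  simp only [pcomm]; group

lemma central_pull {u : G} (hu : ∀ x, x * u = u * x) (x r : G) :
    x * (u * r) = u * (x * r) := by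
  rw [← mul_assoc, hu x, mul_assoc]

lemma comm_pull {a b : G} (h : a * b = b * a) (r : G) :
    b⁻¹ * (a * r) = a * (b⁻¹ * r) := by
  have hc : b⁻¹ * a = a * b⁻¹ := ((Commute.inv_right (h : Commute a b)).eq).symm
  rw [← mul_assoc, hc, mul_assoc]

lemma pcomm_expand (M B L Gm : G)
    (hu : ∀ x, x * pcomm M Gm = pcomm M Gm * x)
    (hv : ∀ x, x * pcomm B L = pcomm B L * x)
    (hBG : B * Gm = Gm * B)
    (hwB : pcomm M L * B = B * pcomm M L)
    (hwG : pcomm M L * Gm = Gm * pcomm M L) :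
    pcomm (M * B) (L * Gm) = pcomm M L * (pcomm M Gm * pcomm B L) := by
  have key : B⁻¹ * (M⁻¹ * (Gm⁻¹ * (L⁻¹ * (M * (B * (L * Gm)))))) =
      pcomm M L * (pcomm M Gm * pcomm B L) := by
    rw [swap_aux M L, swap_aux M Gm, inv_mul_cancel_left,
      central_pull hu, comm_pull hwG, comm_pull hwB,
      swap_aux B L, inv_mul_cancel_left, comm_pull hBG, inv_mul_cancel_left,
      central_pull hv, inv_mul_cancel, mul_one, ← central_pull hu]
  calc pcomm (M * B) (L * Gm)
      = B⁻¹ * (M⁻¹ * (Gm⁻¹ * (L⁻¹ * (M * (B * (L * Gm)))))) := by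
        simp only [pcomm, mul_inv_rev, mul_assoc]
    _ = pcomm M L * (pcomm M Gm * pcomm B L) := key

lemma prod_mul_central {ι : Type*} (l : List ι) (f gg z : ι → G)
    (hf : ∀ i, f i = gg i * z i) (hz : ∀ i, z i ∈ Subgroup.center G) :
    (l.map f).prod = (l.map gg).prod * (l.map z).prod := by
  induction l with
  | nil => simp
  | cons a t ih =>
    simp only [List.map_cons, List.prod_cons, hf, ih]
    rw [mul_assoc, mul_assoc]
    congr 1
    rw [← mul_assoc, ← Subgroup.mem_center_iff.mp (hz a) (List.map gg t).prod, mul_assoc]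

lemma mk_pcomm {N : Subgroup G} [N.Normal] (a b : G) :
    pcomm (QuotientGroup.mk a : G ⧸ N) (QuotientGroup.mk b) =
      QuotientGroup.mk (pcomm a b) := by
  simp only [pcomm, QuotientGroup.mk_mul, QuotientGroup.mk_inv]

lemma mk_list_prod {N : Subgroup G} [N.Normal] (l : List G) :
    (QuotientGroup.mk l.prod : G ⧸ N) =
      (l.map (fun a => (QuotientGroup.mk a : G ⧸ N))).prod := by
  induction l with
  | nil => simp
  | cons a t ih => simp only [List.prod_cons, List.map_cons, QuotientGroup.mk_mul, ih]

lemma rearr (a z b w : G) (h : z * b = b * z) : a * z * (b * w) = a * b * (z * w) := by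
  rw [mul_assoc, ← mul_assoc z, h, mul_assoc, ← mul_assoc]

end AuxLemmas

set_option maxHeartbeats 1000000 in
/-- If an automorphism `φ` of `F/F_{k+2}` (`k ≥ 2`) satisfies
`φ(x_i) = α_i⁻¹ x_i α_i`, `φ(m_j) = m_j β_j`, `φ(l_j) = l_j γ_j` with
`α_i, β_j, γ_j ∈ F_k`, and `φ` fixes the class of `∂ = ∏ x_i ∏ [m_j,l_j]`, then
`∏ᵢ [x_i, α_i] ∏ⱼ [m_j, γ_j][β_j, l_j] = 1` in `F_{k+1}/F_{k+2}`. -/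
theorem stmt13 (n g k : ℕ) (hk : 2 ≤ k)
    (α : Fin (n - 1) → FG n g) (β γ : Fin g → FG n g)
    (hα : ∀ i, α i ∈ lcs (FG n g) k) (hβ : ∀ j, β j ∈ lcs (FG n g) k)
    (hγ : ∀ j, γ j ∈ lcs (FG n g) k)
    (φ : (FG n g ⧸ lcs (FG n g) (k + 2)) ≃* (FG n g ⧸ lcs (FG n g) (k + 2)))
    (hx : ∀ i, φ (QuotientGroup.mk (xgen i)) =
      QuotientGroup.mk ((α i)⁻¹ * xgen i * α i))
    (hm : ∀ j, φ (QuotientGroup.mk (mgen j)) = QuotientGroup.mk (mgen j * β j))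
    (hl : ∀ j, φ (QuotientGroup.mk (lgen j)) = QuotientGroup.mk (lgen j * γ j))
    (hbd : φ (QuotientGroup.mk (bdry n g)) = QuotientGroup.mk (bdry n g)) :
    ((List.finRange (n - 1)).map (fun i => pcomm (xgen i) (α i))).prod *
      ((List.finRange g).map (fun j => pcomm (mgen j) (γ j) * pcomm (β j) (lgen j))).prod
      ∈ lcs (FG n g) (k + 2) := by
  classical
  have hα' : ∀ i, α i ∈ (⊤ : Subgroup (FG n g)).lowerCentralSeries (k - 1) := hα
  have hβ' : ∀ j, β j ∈ (⊤ : Subgroup (FG n g)).lowerCentralSeries (k - 1) := hβ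
  have hγ' : ∀ j, γ j ∈ (⊤ : Subgroup (FG n g)).lowerCentralSeries (k - 1) := hγ
  have hNlcs : lcs (FG n g) (k + 2) = (⊤ : Subgroup (FG n g)).lowerCentralSeries (k + 1) := rfl
  -- commuting modulo N
  have commQ : ∀ (a b : FG n g) (i j : ℕ), a ∈ (⊤ : Subgroup (FG n g)).lowerCentralSeries i →
      b ∈ (⊤ : Subgroup (FG n g)).lowerCentralSeries j → k + 1 ≤ i + j + 1 →
      (QuotientGroup.mk a : FG n g ⧸ lcs (FG n g) (k + 2)) * QuotientGroup.mk b =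
        QuotientGroup.mk b * QuotientGroup.mk a := by
    intro a b i j ha hb hij
    rw [← QuotientGroup.mk_mul, ← QuotientGroup.mk_mul, QuotientGroup.eq]
    have h1 : pcomm b a ∈ (⊤ : Subgroup (FG n g)).lowerCentralSeries (j + i + 1) := pcomm_mem_lcs hb ha
    have h2 : pcomm b a ∈ (⊤ : Subgroup (FG n g)).lowerCentralSeries (k + 1) :=
      (⊤ : Subgroup (FG n g)).lowerCentralSeries_antitone (by omega) h1
    have heq : (a * b)⁻¹ * (b * a) = pcomm b a := by simp only [pcomm]; group
    rw [heq, hNlcs]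
    exact h2
  -- central elements
  have hcen : ∀ a : FG n g, a ∈ (⊤ : Subgroup (FG n g)).lowerCentralSeries k →
      (QuotientGroup.mk a : FG n g ⧸ lcs (FG n g) (k + 2)) ∈ Subgroup.center (FG n g ⧸ lcs (FG n g) (k + 2)) := by
    intro a ha
    rw [Subgroup.mem_center_iff]
    intro q
    refine QuotientGroup.induction_on q ?_
    intro b
    exact commQ b a 0 k (show b ∈ (⊤ : Subgroup (FG n g)).lowerCentralSeries 0 from Subgroup.mem_top _) ha (by omega)
  -- memberships of the various commutators
  have hxa : ∀ i, pcomm (xgen i) (α i) ∈ (⊤ : Subgroup (FG n g)).lowerCentralSeries k := by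
    intro i
    have h1 := pcomm_mem_lcs (show xgen i ∈ (⊤ : Subgroup (FG n g)).lowerCentralSeries 0 from Subgroup.mem_top _) (hα' i)
    have h2 : k = 0 + (k - 1) + 1 := by omega
    rw [h2]
    exact h1
  have hmg : ∀ j, pcomm (mgen j) (γ j) ∈ (⊤ : Subgroup (FG n g)).lowerCentralSeries k := by
    intro j
    have h1 := pcomm_mem_lcs (show mgen j ∈ (⊤ : Subgroup (FG n g)).lowerCentralSeries 0 from Subgroup.mem_top _) (hγ' j)
    have h2 : k = 0 + (k - 1) + 1 := by omega
    rw [h2]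
    exact h1
  have hbl : ∀ j, pcomm (β j) (lgen j) ∈ (⊤ : Subgroup (FG n g)).lowerCentralSeries k := by
    intro j
    have h1 := pcomm_mem_lcs (hβ' j) (show lgen j ∈ (⊤ : Subgroup (FG n g)).lowerCentralSeries 0 from Subgroup.mem_top _)
    have h2 : k = (k - 1) + 0 + 1 := by omega
    rw [h2]
    exact h1
  have hml : ∀ j, pcomm (mgen j) (lgen j) ∈ (⊤ : Subgroup (FG n g)).lowerCentralSeries (0 + 0 + 1) := by
    intro j
    exact pcomm_mem_lcs (i := 0) (j := 0)
      (show mgen j ∈ (⊤ : Subgroup (FG n g)).lowerCentralSeries 0 from Subgroup.mem_top _)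
      (show lgen j ∈ (⊤ : Subgroup (FG n g)).lowerCentralSeries 0 from Subgroup.mem_top _)
  -- pcomm commutes with mk
  have hmp : ∀ a b : FG n g, pcomm (QuotientGroup.mk a : FG n g ⧸ lcs (FG n g) (k + 2)) (QuotientGroup.mk b) =
      QuotientGroup.mk (pcomm a b) := fun a b => mk_pcomm a b
  -- step A : class of bdry as a product
  have hA : (QuotientGroup.mk (bdry n g) : FG n g ⧸ lcs (FG n g) (k + 2)) =
      ((List.finRange (n - 1)).map
        (fun i => (QuotientGroup.mk (xgen i) : FG n g ⧸ lcs (FG n g) (k + 2)))).prod *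
      ((List.finRange g).map
        (fun j => pcomm (QuotientGroup.mk (mgen j) : FG n g ⧸ lcs (FG n g) (k + 2))
          (QuotientGroup.mk (lgen j)))).prod := by
    rw [bdry, QuotientGroup.mk_mul, mk_list_prod, mk_list_prod, List.map_map, List.map_map]
    simp only [Function.comp_def, ← hmp]
  -- step B : φ of the class of bdry
  have hB : φ (QuotientGroup.mk (bdry n g)) =
      ((List.finRange (n - 1)).map
        (fun i => φ (QuotientGroup.mk (xgen i)))).prod *
      ((List.finRange g).map
        (fun j => pcomm (φ (QuotientGroup.mk (mgen j)))
          (φ (QuotientGroup.mk (lgen j))))).prod := by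
    rw [hA, map_mul, map_list_prod, map_list_prod, List.map_map, List.map_map]
    simp only [Function.comp_def, map_pcomm']
  -- step C1 : values on x generators
  have hC1 : ∀ i, φ (QuotientGroup.mk (xgen i)) =
      (QuotientGroup.mk (xgen i) : FG n g ⧸ lcs (FG n g) (k + 2)) *
        QuotientGroup.mk (pcomm (xgen i) (α i)) := by
    intro i
    rw [hx i, ← QuotientGroup.mk_mul]
    congr 1
    simp only [pcomm]
    group
  -- step C2 : values on the commutators of m,l generators
  have hC2 : ∀ j, pcomm (φ (QuotientGroup.mk (mgen j))) (φ (QuotientGroup.mk (lgen j))) =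
      pcomm (QuotientGroup.mk (mgen j) : FG n g ⧸ lcs (FG n g) (k + 2)) (QuotientGroup.mk (lgen j)) *
      (QuotientGroup.mk (pcomm (mgen j) (γ j)) *
        QuotientGroup.mk (pcomm (β j) (lgen j))) := by
    intro j
    rw [hm j, hl j, QuotientGroup.mk_mul, QuotientGroup.mk_mul]
    rw [pcomm_expand (QuotientGroup.mk (mgen j)) (QuotientGroup.mk (β j))
      (QuotientGroup.mk (lgen j)) (QuotientGroup.mk (γ j))
      (fun x => by
        rw [hmp]
        exact Subgroup.mem_center_iff.mp (hcen _ (hmg j)) x)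
      (fun x => by
        rw [hmp]
        exact Subgroup.mem_center_iff.mp (hcen _ (hbl j)) x)
      (commQ (β j) (γ j) (k - 1) (k - 1) (hβ' j) (hγ' j) (by omega))
      (by rw [hmp]; exact commQ _ (β j) (0 + 0 + 1) (k - 1) (hml j) (hβ' j) (by omega))
      (by rw [hmp]; exact commQ _ (γ j) (0 + 0 + 1) (k - 1) (hml j) (hγ' j) (by omega))]
    simp only [hmp]
  -- step D : put things together
  have hD : φ (QuotientGroup.mk (bdry n g)) = QuotientGroup.mk (bdry n g) *
      (((List.finRange (n - 1)).map
          (fun i => (QuotientGroup.mk (pcomm (xgen i) (α i)) : FG n g ⧸ lcs (FG n g) (k + 2)))).prod *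
        ((List.finRange g).map
          (fun j => (QuotientGroup.mk (pcomm (mgen j) (γ j)) : FG n g ⧸ lcs (FG n g) (k + 2)) *
            QuotientGroup.mk (pcomm (β j) (lgen j)))).prod) := by
    rw [hB,
      prod_mul_central (List.finRange (n - 1)) _ _ _ hC1 (fun i => hcen _ (hxa i)),
      prod_mul_central (List.finRange g) _ _ _ hC2
        (fun j => mul_mem (hcen _ (hmg j)) (hcen _ (hbl j)))]
    have hZ1 : ((List.finRange (n - 1)).map
        (fun i => (QuotientGroup.mk (pcomm (xgen i) (α i)) : FG n g ⧸ lcs (FG n g) (k + 2)))).prod ∈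
        Subgroup.center (FG n g ⧸ lcs (FG n g) (k + 2)) := by
      refine Subgroup.list_prod_mem _ ?_
      intro x hxx
      rcases List.mem_map.mp hxx with ⟨i, _, rfl⟩
      exact hcen _ (hxa i)
    rw [rearr _ _ _ _ ((Subgroup.mem_center_iff.mp hZ1 _).symm), ← hA]
  -- step E : the product of the error terms is trivial
  have hE : ((List.finRange (n - 1)).map
        (fun i => (QuotientGroup.mk (pcomm (xgen i) (α i)) : FG n g ⧸ lcs (FG n g) (k + 2)))).prod *
      ((List.finRange g).map
        (fun j => (QuotientGroup.mk (pcomm (mgen j) (γ j)) : FG n g ⧸ lcs (FG n g) (k + 2)) *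
          QuotientGroup.mk (pcomm (β j) (lgen j)))).prod = 1 := by
    have h1 := hbd
    rw [hD] at h1
    exact left_eq_mul.mp h1.symm
  -- conclusion
  refine (QuotientGroup.eq_one_iff _).mp ?_
  rw [QuotientGroup.mk_mul, mk_list_prod, mk_list_prod, List.map_map, List.map_map, ← hE]
  simp only [Function.comp_def, QuotientGroup.mk_mul]
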